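/- Let c_1 \ge 0 and c_2 \ge 0 be real numbers. Then \sup \left\{ \omega_1 c_1 + \frac{\omega_2 \omega_3}{\omega_2 + \omega_3} c_2 \ : \ \omega_1, \omega_2, \omega_3 \ge 0, \ \omega_1 + \omega_2 + \omega_3 = 1 \right\} = \max\left( c_1, \ \frac{c_2}{4} \right), with the convention that \frac{\omega_2 \omega_3}{\omega_2 + \omega_3} = 0 when \omega_2 + \omega_3 = 0; the supremum is attained (at \omega = (1,0,0) in the first case and \omega = (0, 1/2, 1/2) in the second). -/
import Mathlib


/-- Three-armed magic-action allocation: for `c₁, c₂ ≥ 0`,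
`sup { ω₁ c₁ + (ω₂ ω₃/(ω₂+ω₃)) c₂ : ω ∈ Δ(3) } = max(c₁, c₂/4)` (with the convention
that `ω₂ ω₃/(ω₂+ω₃) = 0` when `ω₂ + ω₃ = 0`), and the supremum is attained. -/
theorem stmt_7 (c1 c2 : ℝ) (hc1 : 0 ≤ c1) (hc2 : 0 ≤ c2) :
    IsGreatest
      {y : ℝ | ∃ ω1 ω2 ω3 : ℝ, 0 ≤ ω1 ∧ 0 ≤ ω2 ∧ 0 ≤ ω3 ∧ ω1 + ω2 + ω3 = 1 ∧
        y = ω1 * c1 + (if ω2 + ω3 = 0 then 0 else ω2 * ω3 / (ω2 + ω3)) * c2}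
      (max c1 (c2 / 4)) := by
  constructor
  · rcases le_total (c2 / 4) c1 with h | h
    · refine ⟨1, 0, 0, by norm_num, by norm_num, by norm_num, by norm_num, ?_⟩
      simp [max_eq_left h]
    · refine ⟨0, 1/2, 1/2, by norm_num, by norm_num, by norm_num, by norm_num, ?_⟩
      rw [max_eq_right h]
      norm_num
      ring
  · rintro y ⟨ω1, ω2, ω3, h1, h2, h3, hsum, rfl⟩
    have key : (if ω2 + ω3 = 0 then 0 else ω2 * ω3 / (ω2 + ω3)) ≤ (ω2 + ω3) / 4 := by
      split_ifs with h
      · linarith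
      · rw [div_le_div_iff₀ (lt_of_le_of_ne (by linarith) (Ne.symm h)) (by norm_num)]
        nlinarith [sq_nonneg (ω2 - ω3)]
    have h23 : ω2 + ω3 = 1 - ω1 := by linarith
    have hω1 : ω1 ≤ 1 := by linarith
    calc ω1 * c1 + (if ω2 + ω3 = 0 then 0 else ω2 * ω3 / (ω2 + ω3)) * c2
        ≤ ω1 * c1 + (1 - ω1) * (c2 / 4) := by
          nlinarith [mul_le_mul_of_nonneg_right key hc2]
      _ ≤ ω1 * max c1 (c2/4) + (1 - ω1) * max c1 (c2/4) := by
          gcongr <;> first | linarith | exact le_max_left _ _ | exact le_max_right _ _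
      _ = max c1 (c2/4) := by ring
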